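/- Let E be a pseudo effect algebra satisfying (RDP), and let d : E → ℝ be a subadditive mapping (d(0) = 0 and d(x+y) ≤ d(x) + d(y) whenever x+y is defined in E). Assume that for every x ∈ E the set D(x) := {d(x₁) + ⋯ + d(xₙ) : x = x₁ + ⋯ + xₙ, x₁, …, xₙ ∈ E, n ≥ 1} is bounded above in ℝ. Then the map m : E → ℝ defined by m(x) := sup D(x) is a signed measure on E. -/
import Mathlib


/-- A pseudo effect algebra: a partial algebra `(E; +, 0, 1)` where the partial
addition is encoded as `padd : E → E → Option E` (`padd a b = some c` means
`a + b` is defined and equals `c`). -/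
class PseudoEffectAlgebra (E : Type) where
  padd : E → E → Option E
  pzero : E
  pone : E
  /-- (i) `a+b` and `(a+b)+c` exist iff `b+c` and `a+(b+c)` exist ... -/
  assoc_defined : ∀ a b c : E,
    (∃ x, padd a b = some x ∧ (padd x c).isSome) ↔
      (∃ y, padd b c = some y ∧ (padd a y).isSome)
  /-- ... and in this case `(a+b)+c = a+(b+c)`. -/
  assoc_eq : ∀ a b c x y : E, padd a b = some x → padd b c = some y →
    padd x c = padd a y
  /-- (ii) there is exactly one `d` with `a + d = 1`. -/
  exists_unique_right : ∀ a : E, ∃! d, padd a d = some pone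
  /-- (ii) there is exactly one `e` with `e + a = 1`. -/
  exists_unique_left : ∀ a : E, ∃! e, padd e a = some pone
  /-- (iii) if `a+b` exists, there are `d, e` with `a+b = d+a = b+e`. -/
  shift : ∀ a b c : E, padd a b = some c →
    ∃ d e, padd d a = some c ∧ padd b e = some c
  /-- (iv) if `1+a` exists then `a = 0`. -/
  one_add : ∀ a : E, (padd pone a).isSome → a = pzero
  /-- (iv) if `a+1` exists then `a = 0`. -/
  add_one : ∀ a : E, (padd a pone).isSome → a = pzero

namespace PseudoEffectAlgebra

variable {E : Type} [PseudoEffectAlgebra E]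

/-- The induced partial order: `a ≤ b` iff `b = a + c` for some `c ∈ E`. -/
def pLe (a b : E) : Prop := ∃ c, padd a c = some b

/-- The Riesz Decomposition Property (RDP). -/
def RDP (E : Type) [PseudoEffectAlgebra E] : Prop :=
  ∀ a₁ a₂ b₁ b₂ c : E, padd a₁ a₂ = some c → padd b₁ b₂ = some c →
    ∃ d₁ d₂ d₃ d₄ : E, padd d₁ d₂ = some a₁ ∧ padd d₃ d₄ = some a₂ ∧
      padd d₁ d₃ = some b₁ ∧ padd d₂ d₄ = some b₂

/-- A signed measure on `E`. -/
def IsSignedMeasure (m : E → ℝ) : Prop :=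
  ∀ a b c : E, padd a b = some c → m c = m a + m b

/-- A (positive) measure on `E`. -/
def IsMeasure (m : E → ℝ) : Prop :=
  IsSignedMeasure m ∧ ∀ a : E, 0 ≤ m a

/-- A state on `E`. -/
def IsState (s : E → ℝ) : Prop := IsMeasure s ∧ s pone = 1

/-- A Jordan signed measure: a difference of two measures. -/
def IsJordan (m : E → ℝ) : Prop :=
  ∃ m₁ m₂ : E → ℝ, IsMeasure m₁ ∧ IsMeasure m₂ ∧ m = m₁ - m₂

/-- `m ≤⁺ m'` iff `m' - m` is a (positive) measure. -/
def MLe (m m' : E → ℝ) : Prop := IsMeasure (m' - m)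

/-- The (partial) sum `x₁ + ⋯ + xₙ` of a nonempty list of elements of `E`. -/
def lsum : List E → Option E
  | [] => some pzero
  | [a] => some a
  | a :: b :: l => (lsum (b :: l)).bind (fun s => padd a s)

lemma bind_some' {α β : Type} {o : Option α} {f : α → Option β} {b : β}
    (h : o.bind f = some b) : ∃ a, o = some a ∧ f a = some b := by
  cases o with
  | none => simp at h
  | some a => exact ⟨a, rfl, h⟩

lemma lsum_cons (a : E) (l : List E) (hl : l ≠ []) :
    lsum (a :: l) = (lsum l).bind (fun s => padd a s) := by
  cases l with
  | nil => exact absurd rfl hl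
  | cons b l => rfl

lemma lsum_append (l1 l2 : List E) (h1 : l1 ≠ []) (h2 : l2 ≠ [])
    (a b c : E) (ha : lsum l1 = some a) (hb : lsum l2 = some b)
    (hc : padd a b = some c) : lsum (l1 ++ l2) = some c := by
  induction l1 generalizing a c with
  | nil => exact absurd rfl h1
  | cons x l1 ih =>
    cases l1 with
    | nil =>
      simp only [lsum] at ha
      cases ha
      rw [List.singleton_append, lsum_cons _ _ h2, hb]
      exact hc
    | cons y l1' =>
      rw [lsum_cons _ _ (by simp)] at ha
      obtain ⟨s, hs, hxs⟩ := bind_some' ha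
      obtain ⟨z, hz, _⟩ : ∃ z, padd s b = some z ∧ (padd x z).isSome := by
        refine (assoc_defined x s b).1 ⟨a, hxs, ?_⟩
        rw [hc]; rfl
      have heq := assoc_eq x s b a z hxs hz
      rw [hc] at heq
      have hl12 := ih (by simp) s z hs hz
      rw [List.cons_append, lsum_cons _ _ (by simp), hl12]
      exact heq.symm

lemma split_list (hRDP : RDP E) (d : E → ℝ)
    (hsub : ∀ a b c : E, padd a b = some c → d c ≤ d a + d b) :
    ∀ l : List E, l ≠ [] → ∀ s u v : E, lsum l = some s → padd u v = some s →
    ∃ lu lv : List E, lu ≠ [] ∧ lv ≠ [] ∧ lsum lu = some u ∧ lsum lv = some v ∧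
      (l.map d).sum ≤ (lu.map d).sum + (lv.map d).sum := by
  intro l
  induction l with
  | nil => exact fun h => absurd rfl h
  | cons x l ih =>
    intro _ s u v hs huv
    cases l with
    | nil =>
      simp only [lsum] at hs
      cases hs
      exact ⟨[u], [v], by simp, by simp, rfl, rfl, by simpa using hsub u v x huv⟩
    | cons y l' =>
      rw [lsum_cons _ _ (by simp)] at hs
      obtain ⟨t, ht, hxt⟩ := bind_some' hs
      obtain ⟨d1, d2, d3, d4, h12, h34, h13, h24⟩ := hRDP x t u v s hxt huv
      obtain ⟨lu', lv', hlu', hlv', hsu', hsv', hle⟩ :=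
        ih (by simp) t d3 d4 ht h34
      refine ⟨d1 :: lu', d2 :: lv', by simp, by simp, ?_, ?_, ?_⟩
      · rw [lsum_cons _ _ hlu', hsu']; exact h13
      · rw [lsum_cons _ _ hlv', hsv']; exact h24
      · simp only [List.map_cons, List.sum_cons] at hle ⊢
        have := hsub d1 d2 x h12
        linarith

/-- Proposition 3.1: if `E` is a pseudo effect algebra with (RDP)
and `d : E → ℝ` is subadditive with each `D(x)` bounded above, then
`m(x) := sup D(x)` is a signed measure on `E`. -/
theorem stmt0 (hRDP : RDP E) (d : E → ℝ) (hd0 : d pzero = 0)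
    (hsub : ∀ a b c : E, padd a b = some c → d c ≤ d a + d b)
    (hbdd : ∀ x : E, BddAbove {r : ℝ | ∃ l : List E, l ≠ [] ∧ lsum l = some x ∧
      r = (l.map d).sum}) :
    IsSignedMeasure (fun x : E =>
      sSup {r : ℝ | ∃ l : List E, l ≠ [] ∧ lsum l = some x ∧ r = (l.map d).sum}) := by
  set S : E → Set ℝ := fun x => {r : ℝ | ∃ l : List E, l ≠ [] ∧ lsum l = some x ∧
      r = (l.map d).sum} with hS
  intro a b c hc
  have hmem : ∀ x : E, d x ∈ S x := fun x => ⟨[x], by simp, rfl, by simp⟩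
  have hne : ∀ x : E, (S x).Nonempty := fun x => ⟨d x, hmem x⟩
  show sSup (S c) = sSup (S a) + sSup (S b)
  have key : ∀ r1 ∈ S a, ∀ r2 ∈ S b, r1 + r2 ≤ sSup (S c) := by
    rintro r1 ⟨l1, h1, hs1, rfl⟩ r2 ⟨l2, h2, hs2, rfl⟩
    have happ := lsum_append l1 l2 h1 h2 a b c hs1 hs2 hc
    exact le_csSup (hbdd c) ⟨l1 ++ l2, by simp [h1], happ, by simp⟩
  apply le_antisymm
  · apply csSup_le (hne c)
    rintro r ⟨l, hl, hls, rfl⟩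
    obtain ⟨lu, lv, hlu, hlv, hsu, hsv, hle⟩ := split_list hRDP d hsub l hl c a b hls hc
    have h1 : (lu.map d).sum ≤ sSup (S a) := le_csSup (hbdd a) ⟨lu, hlu, hsu, rfl⟩
    have h2 : (lv.map d).sum ≤ sSup (S b) := le_csSup (hbdd b) ⟨lv, hlv, hsv, rfl⟩
    linarith
  · have hA : sSup (S a) ≤ sSup (S c) - sSup (S b) := by
      apply csSup_le (hne a)
      intro r1 hr1
      have hB : sSup (S b) ≤ sSup (S c) - r1 := by
        apply csSup_le (hne b)
        intro r2 hr2
        linarith [key r1 hr1 r2 hr2]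
      linarith
    linarith

end PseudoEffectAlgebra
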